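/- For all graphs G and H and every integer s ≥ 1, scol_s(G ⊠ H) ≤ scol_s(G)·(Δ(H^s)+1) and wcol_s(G ⊠ H) ≤ wcol_s(G)·(Δ(H^s)+1). -/

import Mathlib

open SimpleGraph

variable {V W : Type}

/-- The strong product of two simple graphs. -/
def strongProd (G : SimpleGraph V) (H : SimpleGraph W) : SimpleGraph (V × W) where
  Adj a b := a ≠ b ∧ (a.1 = b.1 ∨ G.Adj a.1 b.1) ∧ (a.2 = b.2 ∨ H.Adj a.2 b.2)
  symm := by
    constructor
    rintro a b ⟨hne, h1, h2⟩
    exact ⟨hne.symm, by tauto, by tauto⟩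
  loopless := ⟨fun a h => h.1 rfl⟩

infixl:70 " ⊠ " => strongProd

/-- The lexicographic product of two simple graphs. -/
def lexProd (G : SimpleGraph V) (H : SimpleGraph W) : SimpleGraph (V × W) where
  Adj a b := G.Adj a.1 b.1 ∨ (a.1 = b.1 ∧ H.Adj a.2 b.2)
  symm := by
    constructor
    rintro a b (h | ⟨h, h'⟩)
    · exact Or.inl h.symm
    · exact Or.inr ⟨h.symm, h'.symm⟩
  loopless := by
    constructor
    rintro a (h | ⟨_, h⟩)
    · exact G.loopless.irrefl _ h
    · exact H.loopless.irrefl _ h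

/-- `G` is contained in `H`: `G` is isomorphic to a subgraph of `H`. -/
def Contains (G : SimpleGraph V) (H : SimpleGraph W) : Prop :=
  ∃ f : V → W, Function.Injective f ∧ ∀ ⦃u v⦄, G.Adj u v → H.Adj (f u) (f v)

/-- `(T, B)` is a tree-decomposition of `G`. -/
def IsTreeDecomp {ι : Type} (G : SimpleGraph V) (T : SimpleGraph ι) (B : ι → Set V) : Prop :=
  T.IsTree ∧
  (∀ ⦃u v⦄, G.Adj u v → ∃ i, u ∈ B i ∧ v ∈ B i) ∧
  (∀ v : V, (T.induce {i | v ∈ B i}).Connected)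

/-- The treewidth of `G` is at most `t`. -/
def TreewidthLE (G : SimpleGraph V) (t : ℕ) : Prop :=
  ∃ (ι : Type) (T : SimpleGraph ι) (B : ι → Set V),
    IsTreeDecomp G T B ∧ ∀ i, (B i).Finite ∧ (B i).ncard ≤ t + 1

/-- The row treewidth of `G` is at most `t`: `G` is contained in `H ⊠ P`
for some graph `H` of treewidth at most `t` and some path `P`. -/
def RowTreewidthLE (G : SimpleGraph V) (t : ℕ) : Prop :=
  ∃ (ι : Type) (H : SimpleGraph ι) (n : ℕ),
    TreewidthLE H t ∧ Contains G (H ⊠ pathGraph n)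

/-- `μ` is a model of an `r`-shallow minor `H` in `G`: branch sets are connected,
pairwise disjoint, of radius at most `r`, with adjacent branch sets for each edge of `H`. -/
def IsShallowMinorModel (H : SimpleGraph W) (G : SimpleGraph V) (r : ℕ) (μ : W → Set V) : Prop :=
  (∀ w, (G.induce (μ w)).Connected) ∧
  (∀ w, ∃ c : μ w, ∀ u : μ w, (G.induce (μ w)).dist c u ≤ r) ∧
  (Pairwise fun w w' => Disjoint (μ w) (μ w')) ∧
  (∀ ⦃w w'⦄, H.Adj w w' → ∃ u ∈ μ w, ∃ v ∈ μ w', G.Adj u v)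

/-- `H` is an `r`-shallow minor of `G`. -/
def ShallowMinor (H : SimpleGraph W) (G : SimpleGraph V) (r : ℕ) : Prop :=
  ∃ μ : W → Set V, IsShallowMinorModel H G r μ

/-- `H` is an `(m/2)`-shallow topological minor of `G`: a subgraph of `G` is an
`m`-subdivision of `H`, i.e. each edge of `H` is replaced by a path of length at most `m+1`,
and these paths are internally disjoint. -/
def ShallowTopMinor (H : SimpleGraph W) (G : SimpleGraph V) (m : ℕ) : Prop :=
  ∃ f : W → V, Function.Injective f ∧
  ∃ P : ∀ ⦃u v⦄, H.Adj u v → G.Walk (f u) (f v),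
    (∀ ⦃u v⦄ (h : H.Adj u v), (P h).IsPath ∧ (P h).length ≤ m + 1 ∧
      ∀ x ∈ (P h).support, x ∈ Set.range f → (x = f u ∨ x = f v)) ∧
    (∀ ⦃u v x y⦄ (h₁ : H.Adj u v) (h₂ : H.Adj x y), s(u,v) ≠ s(x,y) →
      ∀ z ∈ (P h₁).support, z ∈ (P h₂).support →
        (z = f u ∨ z = f v) ∧ (z = f x ∨ z = f y))

/-- The `s`-th power of a graph: vertices at distance at most `s` are adjacent. -/
def powG (G : SimpleGraph V) (s : ℕ) : SimpleGraph V where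
  Adj u v := u ≠ v ∧ ∃ p : G.Walk u v, p.length ≤ s
  symm := by
    constructor
    rintro u v ⟨h, p, hp⟩
    exact ⟨h.symm, p.reverse, by simpa using hp⟩
  loopless := ⟨fun v h => h.1 rfl⟩

/-- The maximum degree of `G` is at most `d`. -/
def MaxDegLE (G : SimpleGraph V) (d : ℕ) : Prop :=
  ∀ v, (G.neighborSet v).Finite ∧ (G.neighborSet v).ncard ≤ d
open SimpleGraph
variable {V W : Type}

/-- `R(G,⪯,v,s)`: vertices `w ⪯ v` reachable from `v` by a path of length at most `s`
whose internal vertices are all `≻ v`. -/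
def RSet (G : SimpleGraph V) (le : V → V → Prop) (v : V) (s : ℕ) : Set V :=
  {w | le w v ∧ ∃ p : G.Walk v w, p.length ≤ s ∧
    ∀ u ∈ p.support, u ≠ v → u ≠ w → (le v u ∧ u ≠ v)}

/-- `Q(G,⪯,v,s)`: vertices `w ⪯ v` reachable from `v` by a path of length at most `s`
whose internal vertices are all `≻ w`. -/
def QSet (G : SimpleGraph V) (le : V → V → Prop) (v : V) (s : ℕ) : Set V :=
  {w | le w v ∧ ∃ p : G.Walk v w, p.length ≤ s ∧
    ∀ u ∈ p.support, u ≠ v → u ≠ w → (le w u ∧ u ≠ w)}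

/-- The `s`-strong colouring number of `G` is at most `c`. -/
def ScolLE (G : SimpleGraph V) (s : ℕ) (c : ℕ) : Prop :=
  ∃ le : V → V → Prop, IsLinearOrder V le ∧
    ∀ v, (RSet G le v s).Finite ∧ (RSet G le v s).ncard ≤ c

/-- The `s`-weak colouring number of `G` is at most `c`. -/
def WcolLE (G : SimpleGraph V) (s : ℕ) (c : ℕ) : Prop :=
  ∃ le : V → V → Prop, IsLinearOrder V le ∧
    ∀ v, (QSet G le v s).Finite ∧ (QSet G le v s).ncard ≤ c

/-- The queue-number of `G` is at most `q`: there is a linear order of `V(G)` and an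
assignment of edges to `q` queues such that no two edges in the same queue nest. -/
def QueueLE (G : SimpleGraph V) (q : ℕ) : Prop :=
  ∃ le : V → V → Prop, IsLinearOrder V le ∧
    ∃ σ : V → V → ℕ,
      (∀ u v, σ u v = σ v u) ∧
      (∀ ⦃u v⦄, G.Adj u v → σ u v < q) ∧
      (∀ a b c d, G.Adj a b → G.Adj c d → σ a b = σ c d →
        (le a b ∧ a ≠ b) → (le c d ∧ c ≠ d) →
        ¬((le a c ∧ a ≠ c) ∧ (le d b ∧ d ≠ b)))

/-- A `(k,d)`-shortcut system for `G`: a set of paths of length at most `k` such that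
every vertex is an internal vertex of at most `d` of the paths. -/
structure ShortcutSystem (G : SimpleGraph V) (k d : ℕ) where
  paths : Set ((u : V) × (v : V) × G.Walk u v)
  isPath : ∀ p ∈ paths, p.2.2.IsPath
  lengthLE : ∀ p ∈ paths, p.2.2.length ≤ k
  internal : ∀ w : V,
    {p ∈ paths | w ∈ p.2.2.support ∧ w ≠ p.1 ∧ w ≠ p.2.1}.Finite ∧
    {p ∈ paths | w ∈ p.2.2.support ∧ w ≠ p.1 ∧ w ≠ p.2.1}.ncard ≤ d

/-- The supergraph `G^𝒫` of `G` obtained by adding an edge `uv` whenever `𝒫`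
contains a `(u,v)`-path. -/
def shortcutGraph (G : SimpleGraph V) {k d : ℕ} (P : ShortcutSystem G k d) : SimpleGraph V where
  Adj u v := u ≠ v ∧ (G.Adj u v ∨ ∃ p ∈ P.paths, (p.1 = u ∧ p.2.1 = v) ∨ (p.1 = v ∧ p.2.1 = u))
  symm := by
    constructor
    rintro u v ⟨h, h'⟩
    refine ⟨h.symm, ?_⟩
    rcases h' with h' | ⟨p, hp, h'⟩
    · exact Or.inl h'.symm
    · exact Or.inr ⟨p, hp, by tauto⟩
  loopless := ⟨fun v h => h.1 rfl⟩

/-- A `d`-clique lift of `G`: a choice `M v ⊆ N(v)` with `|M v| ≤ d` for each vertex `v`. -/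
structure CliqueLift (G : SimpleGraph V) (d : ℕ) where
  M : V → Set V
  subset_nbhd : ∀ v, M v ⊆ G.neighborSet v
  finite : ∀ v, (M v).Finite
  card_le : ∀ v, (M v).ncard ≤ d

/-- The graph `G^ℳ` obtained from `G` by adding the edge `uw` whenever there is a vertex `v`
with `u ∈ M v` and `w ∈ N(v)`. -/
def cliqueLiftGraph (G : SimpleGraph V) {d : ℕ} (ℳ : CliqueLift G d) : SimpleGraph V where
  Adj u w := u ≠ w ∧ (G.Adj u w ∨ ∃ v, (u ∈ ℳ.M v ∧ w ∈ G.neighborSet v) ∨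
    (w ∈ ℳ.M v ∧ u ∈ G.neighborSet v))
  symm := by
    constructor
    rintro u w ⟨h, h'⟩
    refine ⟨h.symm, ?_⟩
    rcases h' with h' | ⟨v, h'⟩
    · exact Or.inl h'.symm
    · exact Or.inr ⟨v, by tauto⟩
  loopless := ⟨fun v h => h.1 rfl⟩

/-- The `m × m` grid graph. -/
def gridGraph (m : ℕ) : SimpleGraph (Fin m × Fin m) where
  Adj a b := |(a.1 : ℤ) - b.1| + |(a.2 : ℤ) - b.2| = 1
  symm := by
    constructor
    intro a b h
    rw [abs_sub_comm ((b.1 : ℤ)), abs_sub_comm ((b.2 : ℤ))]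
    exact h
  loopless := by constructor; intro a h; simp at h

section ColAux

open SimpleGraph Walk

variable {V W : Type}

/-- Projection of a walk in the strong product to the second coordinate. -/
lemma strongProd_walk_snd {G : SimpleGraph V} {H : SimpleGraph W} :
    ∀ {A B : V × W} (p : (G ⊠ H).Walk A B), ∃ q : H.Walk A.2 B.2, q.length ≤ p.length := by
  intro A B p
  induction p with
  | nil => exact ⟨Walk.nil, le_rfl⟩
  | @cons A C B h p' ih =>
    obtain ⟨q, hq⟩ := ih
    rcases (show A ≠ C ∧ (A.1 = C.1 ∨ G.Adj A.1 C.1) ∧ (A.2 = C.2 ∨ H.Adj A.2 C.2) from h).2.2 with h2 | h2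
    · exact ⟨q.copy h2.symm rfl, by simp [Walk.length_cons]; omega⟩
    · exact ⟨Walk.cons h2 q, by simp [Walk.length_cons]; omega⟩

/-- Key projection lemma for the first coordinate. -/
lemma strongProd_walk_fst {G : SimpleGraph V} {H : SimpleGraph W} (v : V) (P : V → Prop) :
    ∀ (n : ℕ) (A B : V × W) (p : (G ⊠ H).Walk A B), p.length ≤ n →
      (∀ ab ∈ p.support, ab ≠ B → ab.1 = v ∨ P ab.1) →
      ((A.1 = v → ∃ q : G.Walk v B.1, q.length ≤ p.length ∧
          ∀ z ∈ q.support, z ≠ v → z ≠ B.1 → P z) ∧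
       (P A.1 →
          (∃ q : G.Walk v B.1, q.length ≤ p.length ∧
            ∀ z ∈ q.support, z ≠ v → z ≠ B.1 → P z) ∨
          (∃ q : G.Walk A.1 B.1, q.length ≤ p.length ∧
            ∀ z ∈ q.support, z ≠ B.1 → P z))) := by
  intro n
  induction n with
  | zero =>
    intro A B p hlen hyp
    cases p with
    | nil =>
      constructor
      · intro hA
        exact ⟨Walk.nil.copy hA rfl, by simp, by intro z hz hzv _; simp at hz; exact absurd (hz ▸ hA) hzv⟩
      · intro _
        exact Or.inr ⟨Walk.nil, by simp, by intro z hz hzB; simp at hz; exact absurd hz hzB⟩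
    | cons h p' => simp [Walk.length_cons] at hlen
  | succ n ih =>
    intro A B p hlen hyp
    cases p with
    | nil =>
      constructor
      · intro hA
        exact ⟨Walk.nil.copy hA rfl, by simp, by intro z hz hzv _; simp at hz; exact absurd (hz ▸ hA) hzv⟩
      · intro _
        exact Or.inr ⟨Walk.nil, by simp, by intro z hz hzB; simp at hz; exact absurd hz hzB⟩
    | @cons A C B h p' =>
      have hlen' : p'.length ≤ n := by simp [Walk.length_cons] at hlen; omega
      have hyp' : ∀ ab ∈ p'.support, ab ≠ B → ab.1 = v ∨ P ab.1 := by
        intro ab hab hne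
        exact hyp ab (by simp [Walk.support_cons]; exact Or.inr hab) hne
      obtain ⟨T', U'⟩ := ih C B p' hlen' hyp'
      constructor
      · -- T : A.1 = v
        intro hA
        by_cases hCv : C.1 = v
        · obtain ⟨q, hq1, hq2⟩ := T' hCv
          exact ⟨q, by simp [Walk.length_cons]; omega, hq2⟩
        · by_cases hCB : C = B
          · subst hCB
            have hadj : G.Adj v C.1 := by
              rcases (show A ≠ C ∧ (A.1 = C.1 ∨ G.Adj A.1 C.1) ∧ (A.2 = C.2 ∨ H.Adj A.2 C.2) from h).2.1 with h1 | h1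
              · exact absurd (h1.symm.trans hA) hCv
              · exact hA ▸ h1
            refine ⟨Walk.cons hadj Walk.nil, by simp [Walk.length_cons], ?_⟩
            intro z hz hzv hzB
            simp [Walk.support_cons] at hz
            rcases hz with rfl | rfl
            · exact absurd rfl hzv
            · exact absurd rfl hzB
          · have hPC : P C.1 := by
              rcases hyp C (by simp [Walk.support_cons]) hCB with h1 | h1
              · exact absurd h1 hCv
              · exact h1
            have hadj : G.Adj v C.1 := by
              rcases (show A ≠ C ∧ (A.1 = C.1 ∨ G.Adj A.1 C.1) ∧ (A.2 = C.2 ∨ H.Adj A.2 C.2) from h).2.1 with h1 | h1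
              · exact absurd (h1.symm.trans hA) hCv
              · exact hA ▸ h1
            rcases U' hPC with ⟨q, hq1, hq2⟩ | ⟨q, hq1, hq2⟩
            · exact ⟨q, by simp [Walk.length_cons]; omega, hq2⟩
            · refine ⟨Walk.cons hadj q, by simp [Walk.length_cons]; omega, ?_⟩
              intro z hz hzv hzB
              simp [Walk.support_cons] at hz
              rcases hz with rfl | hz
              · exact absurd rfl hzv
              · exact hq2 z hz hzB
      · -- U : P A.1
        intro hPA
        by_cases hCB : C = B
        · subst hCB
          by_cases h1' : A.1 = C.1
          · refine Or.inr ⟨Walk.nil.copy rfl h1', by simp, ?_⟩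
            intro z hz hzB
            simp at hz
            exact absurd (hz.trans h1') hzB
          · have hadj : G.Adj A.1 C.1 := by
              rcases (show A ≠ C ∧ (A.1 = C.1 ∨ G.Adj A.1 C.1) ∧ (A.2 = C.2 ∨ H.Adj A.2 C.2) from h).2.1 with h1 | h1
              · exact absurd h1 h1'
              · exact h1
            refine Or.inr ⟨Walk.cons hadj Walk.nil, by simp [Walk.length_cons], ?_⟩
            intro z hz hzB
            simp [Walk.support_cons] at hz
            rcases hz with rfl | rfl
            · exact hPA
            · exact absurd rfl hzB
        · rcases hyp C (by simp [Walk.support_cons]) hCB with hCv | hPC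
          · obtain ⟨q, hq1, hq2⟩ := T' hCv
            exact Or.inl ⟨q, by simp [Walk.length_cons]; omega, hq2⟩
          · rcases U' hPC with ⟨q, hq1, hq2⟩ | ⟨q, hq1, hq2⟩
            · exact Or.inl ⟨q, by simp [Walk.length_cons]; omega, hq2⟩
            · by_cases h1' : A.1 = C.1
              · refine Or.inr ⟨q.copy h1'.symm rfl, by simp [Walk.length_cons]; omega, ?_⟩
                intro z hz hzB
                simp at hz
                exact hq2 z hz hzB
              · have hadj : G.Adj A.1 C.1 := by
                  rcases (show A ≠ C ∧ (A.1 = C.1 ∨ G.Adj A.1 C.1) ∧ (A.2 = C.2 ∨ H.Adj A.2 C.2) from h).2.1 with h1 | h1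
                  · exact absurd h1 h1'
                  · exact h1
                refine Or.inr ⟨Walk.cons hadj q, by simp [Walk.length_cons]; omega, ?_⟩
                intro z hz hzB
                simp [Walk.support_cons] at hz
                rcases hz with rfl | hz
                · exact hPA
                · exact hq2 z hz hzB

end ColAux

lemma ncard_prod' {α β : Type} (s : Set α) (t : Set β) :
    (s ×ˢ t).ncard = s.ncard * t.ncard := by
  rw [← Nat.card_coe_set_eq, ← Nat.card_coe_set_eq, ← Nat.card_coe_set_eq,
    Nat.card_congr (Equiv.Set.prod s t), Nat.card_prod]

lemma lexIsLinearOrder {V W : Type} (leG : V → V → Prop) (hG : IsLinearOrder V leG)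
    (leW : W → W → Prop) (hW : IsLinearOrder W leW) :
    IsLinearOrder (V × W)
      (fun a b => (leG a.1 b.1 ∧ a.1 ≠ b.1) ∨ (a.1 = b.1 ∧ leW a.2 b.2)) := by
  haveI := hG; haveI := hW
  refine { refl := ?_, trans := ?_, antisymm := ?_, total := ?_ }
  · intro a; exact Or.inr ⟨rfl, refl_of leW a.2⟩
  · rintro a b c (⟨hab, hne⟩ | ⟨heq, hab⟩) (⟨hbc, hne'⟩ | ⟨heq', hbc⟩)
    · refine Or.inl ⟨trans_of leG hab hbc, fun h => hne ?_⟩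
      exact antisymm_of leG hab (h ▸ hbc)
    · exact Or.inl ⟨heq' ▸ hab, heq' ▸ hne⟩
    · exact Or.inl ⟨heq ▸ hbc, heq ▸ hne'⟩
    · exact Or.inr ⟨heq.trans heq', trans_of leW hab hbc⟩
  · rintro a b (⟨hab, hne⟩ | ⟨heq, hab⟩) (⟨hba, hne'⟩ | ⟨heq', hba⟩)
    · exact absurd (antisymm_of leG hab hba) hne
    · exact absurd heq'.symm hne
    · exact absurd heq hne'.symm
    · exact Prod.ext heq (antisymm_of leW hab hba)
  · intro a b
    by_cases h : a.1 = b.1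
    · rcases total_of leW a.2 b.2 with h' | h'
      · exact Or.inl (Or.inr ⟨h, h'⟩)
      · exact Or.inr (Or.inr ⟨h.symm, h'⟩)
    · rcases total_of leG a.1 b.1 with h' | h'
      · exact Or.inl (Or.inl ⟨h', h⟩)
      · exact Or.inr (Or.inl ⟨h', Ne.symm h⟩)

/-- For all graphs `G`, `H` and `s ≥ 1`: `scol_s(G ⊠ H) ≤ scol_s(G)·(Δ(H^s)+1)` and
`wcol_s(G ⊠ H) ≤ wcol_s(G)·(Δ(H^s)+1)`. -/
theorem col_strongProd {V W : Type} (G : SimpleGraph V) (H : SimpleGraph W)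
    (s : ℕ) (hs : 1 ≤ s) (Δ : ℕ) (hΔ : MaxDegLE (powG H s) Δ) :
    (∀ c, ScolLE G s c → ScolLE (G ⊠ H) s (c * (Δ + 1))) ∧
    (∀ c, WcolLE G s c → WcolLE (G ⊠ H) s (c * (Δ + 1))) := by
  obtain ⟨leW, hlinW⟩ : ∃ leW : W → W → Prop, IsLinearOrder W leW := by
    classical
    letI : LinearOrder W := linearOrderOfSTO WellOrderingRel
    exact ⟨(· ≤ ·), ⟨⟩⟩
  constructor
  · -- strong colouring number
    rintro c ⟨leG, hlinG, hb⟩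
    haveI := hlinG
    refine ⟨fun a b => (leG a.1 b.1 ∧ a.1 ≠ b.1) ∨ (a.1 = b.1 ∧ leW a.2 b.2),
      lexIsLinearOrder leG hlinG leW hlinW, ?_⟩
    rintro ⟨v, w⟩
    set leP : V × W → V × W → Prop :=
      fun a b => (leG a.1 b.1 ∧ a.1 ≠ b.1) ∨ (a.1 = b.1 ∧ leW a.2 b.2) with hlePdef
    set S : Set (V × W) := (RSet G leG v s) ×ˢ ({w} ∪ (powG H s).neighborSet w) with hSdef
    have hsub : RSet (G ⊠ H) leP (v, w) s ⊆ S := by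
      rintro ⟨u, x⟩ ⟨hle, p, hplen, hint⟩
      refine Set.mem_prod.2 ⟨?_, ?_⟩
      · -- first coordinate
        have hyp : ∀ ab ∈ p.support, ab ≠ (u, x) → ab.1 = v ∨ (leG v ab.1 ∧ v ≠ ab.1) := by
          intro ab hab hne
          by_cases h0 : ab = (v, w)
          · exact Or.inl (by rw [h0])
          · rcases (hint ab hab h0 hne).1 with h1 | h1
            · exact Or.inr h1
            · exact Or.inl h1.1.symm
        obtain ⟨T, _⟩ := strongProd_walk_fst v (fun z => leG v z ∧ v ≠ z)
          p.length (v, w) (u, x) p le_rfl hyp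
        obtain ⟨q, hql, hqi⟩ := T rfl
        refine ⟨?_, q, hql.trans hplen, ?_⟩
        · rcases hle with ⟨h1, _⟩ | ⟨h1, _⟩
          · exact h1
          · exact (by rw [show u = v from h1]; exact refl_of leG v)
        · intro z hz hzv hzu
          obtain ⟨h1, h2⟩ := hqi z hz hzv hzu
          exact ⟨h1, Ne.symm h2⟩
      · -- second coordinate
        obtain ⟨q2, hq2⟩ := strongProd_walk_snd p
        by_cases hxw : x = w
        · exact Or.inl hxw
        · exact Or.inr (show w ≠ x ∧ ∃ p : H.Walk w x, p.length ≤ s from ⟨fun h => hxw h.symm, q2, hq2.trans hplen⟩)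
    have hNf := (hΔ w).1
    have hRf := (hb v).1
    have hSf : S.Finite := hRf.prod ((Set.finite_singleton w).union hNf)
    refine ⟨hSf.subset hsub, le_trans (Set.ncard_le_ncard hsub hSf) ?_⟩
    rw [hSdef, ncard_prod']
    refine Nat.mul_le_mul (hb v).2 ?_
    rw [Set.singleton_union]
    exact le_trans (Set.ncard_insert_le w _) (by have := (hΔ w).2; omega)
  · -- weak colouring number
    rintro c ⟨leG, hlinG, hb⟩
    haveI := hlinG
    refine ⟨fun a b => (leG a.1 b.1 ∧ a.1 ≠ b.1) ∨ (a.1 = b.1 ∧ leW a.2 b.2),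
      lexIsLinearOrder leG hlinG leW hlinW, ?_⟩
    rintro ⟨v, w⟩
    set leP : V × W → V × W → Prop :=
      fun a b => (leG a.1 b.1 ∧ a.1 ≠ b.1) ∨ (a.1 = b.1 ∧ leW a.2 b.2) with hlePdef
    set S : Set (V × W) := (QSet G leG v s) ×ˢ ({w} ∪ (powG H s).neighborSet w) with hSdef
    have hsub : QSet (G ⊠ H) leP (v, w) s ⊆ S := by
      rintro ⟨u, x⟩ ⟨hle, p, hplen, hint⟩
      refine Set.mem_prod.2 ⟨?_, ?_⟩
      · -- first coordinate
        have hyp : ∀ ab ∈ p.reverse.support, ab ≠ (v, w) → ab.1 = u ∨ (leG u ab.1 ∧ u ≠ ab.1) := by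
          intro ab hab hne
          rw [SimpleGraph.Walk.support_reverse, List.mem_reverse] at hab
          by_cases h0 : ab = (u, x)
          · exact Or.inl (by rw [h0])
          · rcases (hint ab hab hne h0).1 with h1 | h1
            · exact Or.inr h1
            · exact Or.inl h1.1.symm
        obtain ⟨T, _⟩ := strongProd_walk_fst u (fun z => leG u z ∧ u ≠ z)
          p.reverse.length (u, x) (v, w) p.reverse le_rfl hyp
        obtain ⟨q, hql, hqi⟩ := T rfl
        rw [SimpleGraph.Walk.length_reverse] at hql
        refine ⟨?_, q.reverse, by rw [SimpleGraph.Walk.length_reverse]; exact hql.trans hplen, ?_⟩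
        · rcases hle with ⟨h1, _⟩ | ⟨h1, _⟩
          · exact h1
          · exact (by rw [show u = v from h1]; exact refl_of leG v)
        · intro z hz hzv hzu
          rw [SimpleGraph.Walk.support_reverse, List.mem_reverse] at hz
          obtain ⟨h1, h2⟩ := hqi z hz hzu hzv
          exact ⟨h1, Ne.symm h2⟩
      · -- second coordinate
        obtain ⟨q2, hq2⟩ := strongProd_walk_snd p
        by_cases hxw : x = w
        · exact Or.inl hxw
        · exact Or.inr (show w ≠ x ∧ ∃ p : H.Walk w x, p.length ≤ s from ⟨fun h => hxw h.symm, q2, hq2.trans hplen⟩)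
    have hNf := (hΔ w).1
    have hRf := (hb v).1
    have hSf : S.Finite := hRf.prod ((Set.finite_singleton w).union hNf)
    refine ⟨hSf.subset hsub, le_trans (Set.ncard_le_ncard hsub hSf) ?_⟩
    rw [hSdef, ncard_prod']
    refine Nat.mul_le_mul (hb v).2 ?_
    rw [Set.singleton_union]
    exact le_trans (Set.ncard_insert_le w _) (by have := (hΔ w).2; omega)
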